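/- arXiv:1409.6977 — 2 statements merged into one kernel-verified Lean document; each statement's English description precedes it below -/
import Mathlib

section
/- Let A be an oracle that computes the halting set ∅′. A set of computable binary sequences is Markov-semidecidable relative to A if and only if it is K-semidecidable relative to A. -/
/-- The standard enumeration of partial computable functions. -/
noncomputable def phi (e : ℕ) : ℕ →. ℕ := (Denumerable.ofNat Nat.Partrec.Code e).eval

/-- The e-th computably enumerable set. -/
def W (e : ℕ) : Set ℕ := (phi e).Dom

/-- The halting set `∅′`. -/
def halts : Set ℕ := {e | (phi e e).Dom}

/-- Characteristic function of a set of naturals. -/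
noncomputable def chi (S : Set ℕ) : ℕ → Bool :=
  fun n => @decide (n ∈ S) (Classical.propDecidable _)

/-- The finite prefix of length `m` of the oracle `f`. -/
def pref (f : ℕ → ℕ) (m : ℕ) : List ℕ := (List.range m).map f

/-- The finite prefix of length `m` of a boolean oracle. -/
def prefB (f : ℕ → Bool) (m : ℕ) : List Bool := (List.range m).map f

/-- The admissible numbering of Sierpiński space `𝕊 = {⊥,⊤}` (with `⊥ = false`, `⊤ = true`):
`ν_𝕊(e) = ⊤` iff `φ_e(e)↓`. -/
noncomputable def nuS (e : ℕ) : Bool := @decide ((phi e e).Dom) (Classical.propDecidable _)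

/-- `f` is a Type-2 name of the point `s ∈ 𝕊`: `s = ⊤` iff `f` eventually shows a nonzero. -/
def SierpName (f : ℕ → ℕ) (s : Bool) : Prop := (s = true ↔ ∃ n, f n ≠ 0)

/-- `e` is a program (Markov-name) for the binary sequence `x`. -/
def computesSeq (e : ℕ) (x : ℕ → Bool) : Prop :=
  ∀ n, phi e n = Part.some (cond (x n) 1 0)

/-- Kolmogorov complexity of a computable binary sequence. -/
noncomputable def Kseq (x : ℕ → Bool) : ℕ := sInf (Nat.size '' {e | computesSeq e x})

/-- `h` is computable from the oracle `g` via an oracle machine. -/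
def computesFrom (g h : ℕ → Bool) : Prop :=
  ∃ M : ℕ → List Bool → Option Bool, Computable₂ M ∧
    (∀ n l l' b, M n l = some b → M n (l ++ l') = some b) ∧
    ∀ n, ∃ m, M n (prefB g m) = some (h n)

/-- `S` is Markov-semidecidable relative to the oracle `g`. -/
def MarkovSemidecRel (g : ℕ → Bool) (S : Set (ℕ → Bool)) : Prop :=
  ∃ M : ℕ → List Bool → Option Unit, Computable₂ M ∧
    (∀ e l l' v, M e l = some v → M e (l ++ l') = some v) ∧
    ∀ e (x : ℕ → Bool), Computable x → computesSeq e x →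
      (x ∈ S ↔ ∃ m, M e (prefB g m) = some ())

/-- `S` is K-semidecidable relative to the oracle `g`: the machine gets a bound
`k ≥ K(x)` and reads prefixes of both `g` and (a Type-2 name of) `x`. -/
def KSemidecRel (g : ℕ → Bool) (S : Set (ℕ → Bool)) : Prop :=
  ∃ M : ℕ → List Bool → List Bool → Option Unit,
    Computable (fun p : ℕ × List Bool × List Bool => M p.1 p.2.1 p.2.2) ∧
    (∀ k l₁ l₂ l₁' l₂' v, M k l₁ l₂ = some v → M k (l₁ ++ l₁') (l₂ ++ l₂') = some v) ∧
    ∀ (x : ℕ → Bool), Computable x → ∀ k, Kseq x ≤ k →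
      (x ∈ S ↔ ∃ m, M k (prefB g m) (prefB x m) = some ())


open Nat.Partrec.Code

set_option linter.unusedSectionVars false
set_option maxHeartbeats 1000000

noncomputable def c2n : ℕ → Nat.Partrec.Code := Denumerable.ofNat _

lemma prefB_length (f : ℕ → Bool) (m : ℕ) : (prefB f m).length = m := by simp [prefB]

lemma prefB_succ (f : ℕ → Bool) (m : ℕ) : prefB f (m+1) = prefB f m ++ [f m] := by
  simp [prefB, List.range_succ]

lemma prefB_mono (f : ℕ → Bool) {m n : ℕ} (h : m ≤ n) : ∃ t, prefB f n = prefB f m ++ t := by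
  obtain ⟨d, rfl⟩ := Nat.exists_eq_add_of_le h
  induction d with
  | zero => exact ⟨[], by simp⟩
  | succ d ih =>
    obtain ⟨t, ht⟩ := ih (Nat.le_add_right _ _)
    exact ⟨t ++ [f (m+d)], by rw [show m + (d+1) = (m+d)+1 from rfl, prefB_succ, ht, List.append_assoc]⟩

lemma prefB_getD (f : ℕ → Bool) {n m : ℕ} (h : n < m) : (prefB f m).getD n false = f n := by
  simp [prefB, List.getD, List.getElem?_map, List.getElem?_range h]



section
variable {α : Type*} [Primcodable α]

def bex (p : α → ℕ → Bool) (a : α) (n : ℕ) : Bool :=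
  Nat.rec false (fun m ih => cond ih true (p a m)) n

lemma bex_iff (p : α → ℕ → Bool) (a : α) (n : ℕ) :
    bex p a n = true ↔ ∃ m, m < n ∧ p a m = true := by
  induction n with
  | zero => simp [bex]
  | succ n ih =>
    show cond (bex p a n) true (p a n) = true ↔ _
    rcases hb : bex p a n with _ | _
    · simp only [cond]
      constructor
      · intro hp; exact ⟨n, Nat.lt_succ_self n, hp⟩
      · rintro ⟨m, hm, hp⟩
        rcases Nat.lt_succ_iff_lt_or_eq.mp hm with h | rfl
        · exact absurd (ih.mpr ⟨m, h, hp⟩) (by simp [hb])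
        · exact hp
    · simp only [cond, true_iff]
      obtain ⟨m, hm, hp⟩ := ih.mp hb
      exact ⟨m, hm.trans (Nat.lt_succ_self n), hp⟩

lemma bex_comp {p : α → ℕ → Bool} (hp : Computable₂ p) : Computable₂ (bex p) :=
  (Computable.nat_rec Computable.snd (Computable.const false)
    (Computable.cond (Computable.snd.comp Computable.snd) (Computable.const true)
      (hp.comp (Computable.fst.comp Computable.fst) (Computable.fst.comp Computable.snd))).to₂).to₂

def ball (p : α → ℕ → Bool) (a : α) (n : ℕ) : Bool :=
  Nat.rec true (fun m ih => cond ih (p a m) false) n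

lemma ball_iff (p : α → ℕ → Bool) (a : α) (n : ℕ) :
    ball p a n = true ↔ ∀ m, m < n → p a m = true := by
  induction n with
  | zero => simp [ball]
  | succ n ih =>
    show cond (ball p a n) (p a n) false = true ↔ _
    rcases hb : ball p a n with _ | _
    · simp only [cond]
      constructor
      · intro h; simp at h
      · intro h; exact absurd (ih.mpr fun m hm => h m (hm.trans (Nat.lt_succ_self n))) (by simp [hb])
    · simp only [cond]
      constructor
      · intro hp m hm
        rcases Nat.lt_succ_iff_lt_or_eq.mp hm with h | rfl
        · exact ih.mp hb m h
        · exact hp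
      · intro h; exact h n (Nat.lt_succ_self n)

lemma ball_comp {p : α → ℕ → Bool} (hp : Computable₂ p) : Computable₂ (ball p) :=
  (Computable.nat_rec Computable.snd (Computable.const true)
    (Computable.cond (Computable.snd.comp Computable.snd)
      (hp.comp (Computable.fst.comp Computable.fst) (Computable.fst.comp Computable.snd))
      (Computable.const false)).to₂).to₂

def buildL (p : α → ℕ → Bool) (a : α) (n : ℕ) : List Bool :=
  Nat.rec [] (fun m ih => ih ++ [p a m]) n

lemma buildL_eq {p : α → ℕ → Bool} {a : α} {x : ℕ → Bool} {m : ℕ}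
    (h : ∀ i, i < m → p a i = x i) : buildL p a m = prefB x m := by
  induction m with
  | zero => rfl
  | succ m ih =>
    show buildL p a m ++ [p a m] = _
    rw [ih fun i hi => h i (hi.trans (Nat.lt_succ_self m)), h m (Nat.lt_succ_self m)]
    simp [prefB, List.range_succ]

lemma buildL_congr {p q : α → ℕ → Bool} {a b : α} {m : ℕ}
    (h : ∀ i, i < m → p a i = q b i) : buildL p a m = buildL q b m := by
  induction m with
  | zero => rfl
  | succ m ih =>
    show buildL p a m ++ [p a m] = buildL q b m ++ [q b m]
    rw [ih fun i hi => h i (hi.trans (Nat.lt_succ_self m)), h m (Nat.lt_succ_self m)]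

lemma buildL_comp {p : α → ℕ → Bool} (hp : Computable₂ p) : Computable₂ (buildL p) :=
  (Computable.nat_rec Computable.snd (Computable.const [])
    (Computable.list_append.comp (Computable.snd.comp Computable.snd)
      (Computable.list_cons.comp
        (hp.comp (Computable.fst.comp Computable.fst) (Computable.fst.comp Computable.snd))
        (Computable.const []))).to₂).to₂

def pw (k : ℕ) : ℕ := Nat.rec 1 (fun _ ih => 2 * ih) k

lemma pw_eq (k : ℕ) : pw k = 2 ^ k := by
  induction k with
  | zero => rfl
  | succ k ih => show 2 * pw k = _; rw [ih, pow_succ]; ring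

lemma pw_comp : Computable pw :=
  (Computable.nat_rec Computable.id (Computable.const 1)
    (Primrec.nat_mul.to_comp.comp (Computable.const 2)
      (Computable.snd.comp Computable.snd)).to₂)

end


lemma phi_def (e : ℕ) : phi e = (c2n e).eval := rfl

lemma chi_eq_true {S : Set ℕ} {n : ℕ} : chi S n = true ↔ n ∈ S := by
  simp [chi]

lemma computesSeq.evaln_eq {e : ℕ} {x : ℕ → Bool} (hx : computesSeq e x) {s n v : ℕ}
    (hv : v ∈ evaln s (c2n e) n) : v = cond (x n) 1 0 := by
  have h1 : v ∈ (c2n e).eval n := evaln_sound hv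
  rw [← phi_def, hx n] at h1
  simpa using h1

lemma computesSeq.evaln_total {e : ℕ} {x : ℕ → Bool} (hx : computesSeq e x) (m : ℕ) :
    ∃ s, ∀ i, i < m → (cond (x i) 1 0) ∈ evaln s (c2n e) i := by
  induction m with
  | zero => exact ⟨0, fun i hi => absurd hi (Nat.not_lt_zero i)⟩
  | succ m ih =>
    obtain ⟨s, hs⟩ := ih
    have h1 : (cond (x m) 1 0) ∈ (c2n e).eval m := by
      rw [← phi_def, hx m]; exact Part.mem_some _
    obtain ⟨s', hs'⟩ := evaln_complete.mp h1
    refine ⟨max s s', fun i hi => ?_⟩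
    rcases Nat.lt_succ_iff_lt_or_eq.mp hi with h | rfl
    · exact evaln_mono (le_max_left _ _) (hs i h)
    · exact evaln_mono (le_max_right _ _) hs'

def qc (e n : ℕ) : ℕ := Encodable.encode ((Denumerable.ofNat Nat.Partrec.Code e).comp (Nat.Partrec.Code.const n))

lemma qc_spec (e n : ℕ) : (chi halts (qc e n) = true) ↔ (phi e n).Dom := by
  rw [chi_eq_true]
  show (phi (qc e n) (qc e n)).Dom ↔ _
  have h1 : phi (qc e n) = ((c2n e).comp (Nat.Partrec.Code.const n)).eval := by
    show (Denumerable.ofNat Nat.Partrec.Code (Encodable.encode _)).eval = _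
    rw [Denumerable.ofNat_encode]; rfl
  have h2 : ((c2n e).comp (Nat.Partrec.Code.const n)).eval (qc e n) = phi e n := by
    show eval (Nat.Partrec.Code.const n) (qc e n) >>= (c2n e).eval = _
    rw [eval_const, phi_def]
    exact Part.bind_some _ _
  rw [h1, h2]

lemma qc_prim : Primrec₂ qc :=
  Primrec.encode.comp <| primrec₂_comp.comp ((Primrec.ofNat _).comp Primrec.fst)
    (primrec_const.comp Primrec.snd)

lemma exists_code_seq {x : ℕ → Bool} (hx : Computable x) : ∃ e, computesSeq e x := by
  have h1 : Computable fun n => (cond (x n) 1 0 : ℕ) :=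
    Computable.cond hx (Computable.const 1) (Computable.const 0)
  have h2 : Nat.Partrec fun n => (Part.some (cond (x n) 1 0) : Part ℕ) :=
    Partrec.nat_iff.mp h1
  obtain ⟨c, hc⟩ := exists_code.mp h2
  refine ⟨Encodable.encode c, fun n => ?_⟩
  show (Denumerable.ofNat Nat.Partrec.Code (Encodable.encode c)).eval n = _
  rw [Denumerable.ofNat_encode, hc]

lemma kseq_le {e : ℕ} {x : ℕ → Bool} (h : computesSeq e x) : Kseq x ≤ Nat.size e :=
  Nat.sInf_le ⟨e, h, rfl⟩

lemma kseq_wit {x : ℕ → Bool} (hx : Computable x) :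
    ∃ e, computesSeq e x ∧ Nat.size e = Kseq x := by
  obtain ⟨e, he⟩ := exists_code_seq hx
  have hne : (Nat.size '' {e | computesSeq e x}).Nonempty := ⟨Nat.size e, e, he, rfl⟩
  obtain ⟨e', he', hs⟩ := Nat.sInf_mem hne
  exact ⟨e', he', hs⟩

section D1
variable (MK : ℕ → List Bool → List Bool → Option Unit)

noncomputable def d1def : (ℕ × List Bool) → ℕ → Bool := fun a i =>
  (evaln a.2.length (c2n a.1) i).isSome

noncomputable def d1gb : (ℕ × List Bool) → ℕ → Bool := fun a i => a.2.getD i false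

noncomputable def d1xb : (ℕ × List Bool) → ℕ → Bool := fun a i =>
  decide ((evaln a.2.length (c2n a.1) i).getD 0 = 1)

noncomputable def d1body : (ℕ × List Bool) → ℕ → Bool := fun a m =>
  cond (ball d1def a m) (MK a.1 (buildL d1gb a m) (buildL d1xb a m)).isSome false

noncomputable def d1M : ℕ → List Bool → Option Unit := fun e l =>
  cond (bex (d1body MK) (e, l) (l.length + 1)) (some ()) none

lemma evq_prim : Primrec fun q : (ℕ × List Bool) × ℕ =>
    evaln q.1.2.length (c2n q.1.1) q.2 :=
  primrec_evaln.comp (((Primrec.list_length.comp (Primrec.snd.comp Primrec.fst)).pair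
    ((Primrec.ofNat _).comp (Primrec.fst.comp Primrec.fst))).pair Primrec.snd)

lemma d1def_comp : Computable₂ d1def :=
  (Primrec.option_isSome.comp evq_prim).to_comp.to₂

lemma d1gb_comp : Computable₂ d1gb :=
  ((Primrec.list_getD false).comp (Primrec.snd.comp Primrec.fst) Primrec.snd).to_comp.to₂

lemma d1xb_comp : Computable₂ d1xb :=
  (Primrec.eq.comp (Primrec.option_getD.comp evq_prim (Primrec.const 0))
    (Primrec.const 1)).decide.to_comp.to₂

lemma d1body_comp (hMK : Computable fun p : ℕ × List Bool × List Bool => MK p.1 p.2.1 p.2.2) :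
    Computable₂ (d1body MK) :=
  (Computable.cond (ball_comp d1def_comp)
    (Primrec.option_isSome.to_comp.comp
      (hMK.comp ((Computable.fst.comp Computable.fst).pair
        (((buildL_comp d1gb_comp).comp Computable.fst Computable.snd).pair
         ((buildL_comp d1xb_comp).comp Computable.fst Computable.snd)))))
    (Computable.const false)).to₂

lemma d1M_comp (hMK : Computable fun p : ℕ × List Bool × List Bool => MK p.1 p.2.1 p.2.2) :
    Computable₂ (d1M MK) :=
  (Computable.cond ((bex_comp (d1body_comp MK hMK)).comp Computable.id
      (Computable.succ.comp (Computable.list_length.comp Computable.snd)))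
    (Computable.const (some ())) (Computable.const none)).to₂

lemma cond_some_eq {b : Bool} {v : Unit} (h : (cond b (some ()) none : Option Unit) = some v) :
    b = true := by cases b <;> simp_all

lemma cond_true_eq {c₁ c₂ : Bool} (h : cond c₁ c₂ false = true) : c₁ = true ∧ c₂ = true := by
  cases c₁ <;> simp_all

lemma d1M_mono (e : ℕ) (l l' : List Bool) (v : Unit) (h : d1M MK e l = some v) :
    d1M MK e (l ++ l') = some v := by
  have hb := cond_some_eq h
  obtain ⟨m, hm, hbody⟩ := (bex_iff _ _ _).mp hb
  obtain ⟨hball, hsome⟩ := cond_true_eq hbody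
  have hmle : m ≤ l.length := Nat.lt_succ_iff.mp hm
  have hlen : l.length ≤ (l ++ l').length := by simp
  -- transfer evaln facts
  have hev : ∀ i, i < m → evaln (l ++ l').length (c2n e) i = evaln l.length (c2n e) i := by
    intro i hi
    have h1 : (evaln l.length (c2n e) i).isSome = true := (ball_iff _ _ _).mp hball i hi
    obtain ⟨w, hw⟩ := Option.isSome_iff_exists.mp h1
    have h2 : evaln (l ++ l').length (c2n e) i = some w := evaln_mono hlen hw
    rw [hw, h2]
  have hball' : ball d1def (e, l ++ l') m = true := by
    rw [ball_iff]
    intro i hi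
    show (evaln (l ++ l').length (c2n e) i).isSome = true
    rw [hev i hi]
    exact (ball_iff _ _ _).mp hball i hi
  have hgb : buildL d1gb (e, l ++ l') m = buildL d1gb (e, l) m := by
    apply buildL_congr
    intro i hi
    exact List.getD_append _ _ _ _ (lt_of_lt_of_le hi hmle)
  have hxb : buildL d1xb (e, l ++ l') m = buildL d1xb (e, l) m := by
    apply buildL_congr
    intro i hi
    show decide _ = decide _
    rw [show (evaln (e, l ++ l').2.length (c2n (e, l ++ l').1) i) = _ from hev i hi]
  have hbody' : d1body MK (e, l ++ l') m = true := by
    show cond _ _ _ = true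
    rw [hball', hgb, hxb]
    exact hsome
  have hbex : bex (d1body MK) (e, l ++ l') ((l ++ l').length + 1) = true :=
    (bex_iff _ _ _).mpr ⟨m, by simp; omega, hbody'⟩
  cases v
  show cond _ _ _ = some ()
  rw [hbex]
  rfl

lemma xb_decide (b : Bool) : decide ((cond b 1 0 : ℕ) = 1) = b := by cases b <;> simp

lemma optUnit_some {o : Option Unit} : o.isSome = true ↔ o = some () := by
  cases o with
  | none => simp
  | some u => cases u; simp

lemma d1M_spec {g : ℕ → Bool} {S : Set (ℕ → Bool)}
    (hspec : ∀ (x : ℕ → Bool), Computable x → ∀ k, Kseq x ≤ k →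
      (x ∈ S ↔ ∃ m, MK k (prefB g m) (prefB x m) = some ()))
    (e : ℕ) (x : ℕ → Bool) (hx : Computable x) (hcs : computesSeq e x) :
    (x ∈ S ↔ ∃ m, d1M MK e (prefB g m) = some ()) := by
  have hKle : Kseq x ≤ e := (kseq_le hcs).trans (Nat.size_le.mpr (Nat.lt_two_pow_self (n := e)))
  constructor
  · intro hxS
    obtain ⟨m₀, hm₀⟩ := (hspec x hx e hKle).mp hxS
    obtain ⟨s, hs⟩ := hcs.evaln_total m₀
    refine ⟨max m₀ s, ?_⟩
    set t := max m₀ s with ht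
    have hlen : (prefB g t).length = t := prefB_length g t
    have hev : ∀ i, i < m₀ → evaln (prefB g t).length (c2n e) i = some (cond (x i) 1 0) := by
      intro i hi
      rw [hlen]
      exact evaln_mono (le_max_right _ _) (hs i hi)
    have hball : ball d1def (e, prefB g t) m₀ = true := by
      rw [ball_iff]; intro i hi
      show (evaln (prefB g t).length (c2n e) i).isSome = true
      rw [hev i hi]; rfl
    have hgb : buildL d1gb (e, prefB g t) m₀ = prefB g m₀ := by
      apply buildL_eq; intro i hi
      exact prefB_getD g (lt_of_lt_of_le hi (le_max_left _ _))
    have hxb : buildL d1xb (e, prefB g t) m₀ = prefB x m₀ := by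
      apply buildL_eq; intro i hi
      show decide _ = x i
      rw [hev i hi]
      exact xb_decide (x i)
    have hbody : d1body MK (e, prefB g t) m₀ = true := by
      show cond _ _ _ = true
      rw [hball, hgb, hxb, hm₀]
      rfl
    have hbex : bex (d1body MK) (e, prefB g t) ((prefB g t).length + 1) = true := by
      refine (bex_iff _ _ _).mpr ⟨m₀, ?_, hbody⟩
      rw [hlen]
      exact lt_of_le_of_lt (le_max_left _ _) (Nat.lt_succ_self t)
    show cond _ _ _ = some ()
    rw [hbex]
    rfl
  · rintro ⟨t, ht⟩
    have hb := cond_some_eq ht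
    obtain ⟨m, hm, hbody⟩ := (bex_iff _ _ _).mp hb
    obtain ⟨hball, hsome⟩ := cond_true_eq hbody
    have hlen : (prefB g t).length = t := prefB_length g t
    have hmle : m ≤ t := by rw [hlen] at hm; omega
    have hgb : buildL d1gb (e, prefB g t) m = prefB g m := by
      apply buildL_eq; intro i hi
      exact prefB_getD g (lt_of_lt_of_le hi hmle)
    have hxb : buildL d1xb (e, prefB g t) m = prefB x m := by
      apply buildL_eq; intro i hi
      have h1 : (evaln (prefB g t).length (c2n e) i).isSome = true :=
        (ball_iff _ _ _).mp hball i hi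
      obtain ⟨w, hw⟩ := Option.isSome_iff_exists.mp h1
      have hwv : w = cond (x i) 1 0 := hcs.evaln_eq hw
      show decide _ = x i
      rw [hw]
      show decide (w = 1) = x i
      rw [hwv]
      exact xb_decide (x i)
    rw [hgb, hxb] at hsome
    exact (hspec x hx e hKle).mpr ⟨m, optUnit_some.mp hsome⟩

end D1
lemma oracle_val {g : ℕ → Bool} {h : ℕ → Bool} {M : ℕ → List Bool → Option Bool}
    (mono : ∀ n l l' b, M n l = some b → M n (l ++ l') = some b)
    (hM : ∀ n, ∃ m, M n (prefB g m) = some (h n)) {n m : ℕ} {b : Bool}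
    (hb : M n (prefB g m) = some b) : b = h n := by
  obtain ⟨m', hm'⟩ := hM n
  rcases le_total m m' with hle | hle
  · obtain ⟨t, ht⟩ := prefB_mono g hle
    have h2 := mono n _ t _ hb
    rw [← ht, hm'] at h2
    exact (Option.some.inj h2).symm
  · obtain ⟨t, ht⟩ := prefB_mono g hle
    have h2 := mono n _ t _ hm'
    rw [← ht, hb] at h2
    exact Option.some.inj h2

lemma cond3 {b1 b2 b3 : Bool} :
    cond b1 true (cond b2 true b3) = true ↔ (b1 = true ∨ b2 = true ∨ b3 = true) := by
  cases b1 <;> cases b2 <;> simp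

lemma combine {C : ℕ → ℕ → Prop} :
    ∀ B : ℕ, (∀ e, e < B → ∃ t, ∀ m, t ≤ m → C e m) →
      ∃ t, ∀ m, t ≤ m → ∀ e, e < B → C e m := by
  intro B
  induction B with
  | zero => exact fun _ => ⟨0, fun m _ e he => absurd he (Nat.not_lt_zero e)⟩
  | succ B ih =>
    intro h
    obtain ⟨t1, ht1⟩ := ih fun e he => h e (he.trans B.lt_succ_self)
    obtain ⟨t2, ht2⟩ := h B B.lt_succ_self
    refine ⟨max t1 t2, fun m hm e he => ?_⟩
    rcases Nat.lt_succ_iff_lt_or_eq.mp he with h' | rfl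
    · exact ht1 m (le_trans (le_max_left _ _) hm) e h'
    · exact ht2 m (le_trans (le_max_right _ _) hm)

section D2
variable (Mh : ℕ → List Bool → Option Bool) (N : ℕ → List Bool → Option Unit)

noncomputable def d2c1 : ((ℕ × List Bool × List Bool) × ℕ) → ℕ → Bool := fun q n =>
  decide (Mh (qc q.2 n) q.1.2.1 = some false)

noncomputable def d2c2 : ((ℕ × List Bool × List Bool) × ℕ) → ℕ → Bool := fun q n =>
  cond (evaln q.1.2.1.length (c2n q.2) n).isSome
    (!decide ((evaln q.1.2.1.length (c2n q.2) n).getD 0 = cond (q.1.2.2.getD n false) 1 0))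
    false

noncomputable def d2cl : (ℕ × List Bool × List Bool) → ℕ → Bool := fun a e =>
  cond (bex (d2c1 Mh) (a, e) a.2.1.length) true
    (cond (bex d2c2 (a, e) a.2.2.length) true (N e a.2.1).isSome)

noncomputable def d2M : ℕ → List Bool → List Bool → Option Unit := fun k l₁ l₂ =>
  cond (ball (d2cl Mh N) (k, l₁, l₂) (pw k)) (some ()) none

lemma d2c1_comp (hMh : Computable₂ Mh) : Computable₂ (d2c1 Mh) :=
  (Primrec.eq.decide.to_comp.comp
    (hMh.comp (qc_prim.to_comp.comp (Computable.snd.comp Computable.fst) Computable.snd)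
      (Computable.fst.comp (Computable.snd.comp (Computable.fst.comp Computable.fst))))
    (Computable.const (some false))).to₂

lemma evq2_prim : Primrec fun p : (((ℕ × List Bool × List Bool) × ℕ)) × ℕ =>
    evaln p.1.1.2.1.length (c2n p.1.2) p.2 :=
  primrec_evaln.comp (((Primrec.list_length.comp
      (Primrec.fst.comp (Primrec.snd.comp (Primrec.fst.comp Primrec.fst)))).pair
    ((Primrec.ofNat _).comp (Primrec.snd.comp Primrec.fst))).pair Primrec.snd)

lemma d2c2_comp : Computable₂ d2c2 :=
  (Primrec.cond (Primrec.option_isSome.comp evq2_prim)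
    (Primrec.not.comp (Primrec.eq.comp
      (Primrec.option_getD.comp evq2_prim (Primrec.const 0))
      (Primrec.cond ((Primrec.list_getD false).comp
          (Primrec.snd.comp (Primrec.snd.comp (Primrec.fst.comp Primrec.fst))) Primrec.snd)
        (Primrec.const 1) (Primrec.const 0))).decide)
    (Primrec.const false)).to_comp.to₂

lemma d2cl_comp (hMh : Computable₂ Mh)
    (hN : Computable₂ N) : Computable₂ (d2cl Mh N) :=
  (Computable.cond ((bex_comp (d2c1_comp Mh hMh)).comp Computable.id
      (Computable.list_length.comp (Computable.fst.comp (Computable.snd.comp Computable.fst))))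
    (Computable.const true)
    (Computable.cond ((bex_comp d2c2_comp).comp Computable.id
        (Computable.list_length.comp (Computable.snd.comp (Computable.snd.comp Computable.fst))))
      (Computable.const true)
      (Primrec.option_isSome.to_comp.comp (hN.comp Computable.snd
        (Computable.fst.comp (Computable.snd.comp Computable.fst)))))).to₂

lemma d2M_comp (hMh : Computable₂ Mh) (hN : Computable₂ N) :
    Computable fun p : ℕ × List Bool × List Bool => d2M Mh N p.1 p.2.1 p.2.2 :=
  Computable.cond ((ball_comp (d2cl_comp Mh N hMh hN)).comp Computable.id
      (pw_comp.comp Computable.fst))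
    (Computable.const (some ())) (Computable.const none)

lemma d2M_mono (hMhmono : ∀ n l l' b, Mh n l = some b → Mh n (l ++ l') = some b)
    (hNmono : ∀ e l l' v, N e l = some v → N e (l ++ l') = some v)
    (k : ℕ) (l₁ l₂ l₁' l₂' : List Bool) (v : Unit) (h : d2M Mh N k l₁ l₂ = some v) :
    d2M Mh N k (l₁ ++ l₁') (l₂ ++ l₂') = some v := by
  have hb : ball (d2cl Mh N) (k, l₁, l₂) (pw k) = true := cond_some_eq h
  have hball : ball (d2cl Mh N) (k, l₁ ++ l₁', l₂ ++ l₂') (pw k) = true := by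
    rw [ball_iff]
    intro e he
    have hcl := (ball_iff _ _ _).mp hb e he
    have hcl' := cond3.mp hcl
    show cond _ true (cond _ true _) = true
    rw [cond3]
    rcases hcl' with h1 | h2 | h3
    · left
      obtain ⟨n, hn, hd⟩ := (bex_iff _ _ _).mp h1
      have hn' : n < l₁.length := hn
      refine (bex_iff _ _ _).mpr ⟨n, by show n < (l₁ ++ l₁').length; simp; omega, ?_⟩
      show decide (Mh (qc e n) (l₁ ++ l₁') = some false) = true
      have := of_decide_eq_true hd
      exact decide_eq_true (hMhmono _ _ _ _ this)
    · right; left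
      obtain ⟨n, hn, hd⟩ := (bex_iff _ _ _).mp h2
      have hn' : n < l₂.length := hn
      refine (bex_iff _ _ _).mpr ⟨n, by show n < (l₂ ++ l₂').length; simp; omega, ?_⟩
      obtain ⟨hiso, hneq⟩ := cond_true_eq hd
      obtain ⟨w, hw⟩ := Option.isSome_iff_exists.mp hiso
      have hw' : evaln (l₁ ++ l₁').length (c2n e) n = some w :=
        evaln_mono (by simp) hw
      show cond _ _ _ = true
      rw [hw']
      show (!decide (w = cond ((l₂ ++ l₂').getD n false) 1 0)) = true
      rw [List.getD_append _ _ _ _ hn]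
      rw [hw] at hneq
      exact hneq
    · right; right
      have h4 : N e l₁ = some () := optUnit_some.mp h3
      show (N e (l₁ ++ l₁')).isSome = true
      rw [hNmono _ _ _ _ h4]
      rfl
  cases v
  show cond _ _ _ = some ()
  rw [hball]
  rfl

lemma d2M_spec {g : ℕ → Bool} {S : Set (ℕ → Bool)}
    (hMhmono : ∀ n l l' b, Mh n l = some b → Mh n (l ++ l') = some b)
    (hMhspec : ∀ n, ∃ m, Mh n (prefB g m) = some (chi halts n))
    (hNmono : ∀ e l l' v, N e l = some v → N e (l ++ l') = some v)
    (hNspec : ∀ e (x : ℕ → Bool), Computable x → computesSeq e x →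
      (x ∈ S ↔ ∃ m, N e (prefB g m) = some ()))
    (x : ℕ → Bool) (hx : Computable x) (k : ℕ) (hk : Kseq x ≤ k) :
    (x ∈ S ↔ ∃ m, d2M Mh N k (prefB g m) (prefB x m) = some ()) := by
  obtain ⟨e₀, he₀, hs₀⟩ := kseq_wit hx
  have he₀lt : e₀ < pw k := by
    rw [pw_eq]
    exact Nat.size_le.mp (hs₀ ▸ hk)
  constructor
  · -- completeness
    intro hxS
    have claim : ∀ e, e < pw k → ∃ t, ∀ m, t ≤ m →
        d2cl Mh N (k, prefB g m, prefB x m) e = true := by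
      intro e _
      by_cases htot : ∀ n, (phi e n).Dom
      · by_cases hcs : computesSeq e x
        · -- clause 3
          obtain ⟨m₁, hm₁⟩ := (hNspec e x hx hcs).mp hxS
          refine ⟨m₁, fun m hm => ?_⟩
          show cond _ true (cond _ true _) = true
          rw [cond3]
          right; right
          obtain ⟨t, ht⟩ := prefB_mono g hm
          show (N e (prefB g m)).isSome = true
          rw [ht, hNmono _ _ _ _ hm₁]
          rfl
        · -- clause 2
          have hex : ∃ n, phi e n ≠ Part.some (cond (x n) 1 0) := by
            by_contra hc
            push_neg at hc
            exact hcs hc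
          obtain ⟨n, hn⟩ := hex
          obtain ⟨w, hw⟩ := Part.dom_iff_mem.mp (htot n)
          have hwne : w ≠ cond (x n) 1 0 := by
            intro hEq
            exact hn (hEq ▸ Part.eq_some_iff.mpr hw)
          have hwe : w ∈ (c2n e).eval n := hw
          obtain ⟨s, hsw⟩ := evaln_complete.mp hwe
          refine ⟨max s (n + 1), fun m hm => ?_⟩
          show cond _ true (cond _ true _) = true
          rw [cond3]
          right; left
          refine (bex_iff _ _ _).mpr ⟨n, by rw [prefB_length]; omega, ?_⟩
          have hev : evaln (prefB g m).length (c2n e) n = some w := by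
            rw [prefB_length]
            exact evaln_mono (le_trans (le_max_left _ _) hm) hsw
          show cond _ _ _ = true
          rw [hev]
          show (!decide (w = cond ((prefB x m).getD n false) 1 0)) = true
          rw [prefB_getD x (show n < m by omega)]
          rw [decide_eq_false hwne]
          rfl
      · -- clause 1
        push_neg at htot
        obtain ⟨n, hn⟩ := htot
        have hchi : chi halts (qc e n) = false := by
          rcases hq : chi halts (qc e n) with _ | _
          · rfl
          · exact absurd ((qc_spec e n).mp hq) hn
        obtain ⟨m₀, hm₀⟩ := hMhspec (qc e n)
        rw [hchi] at hm₀
        refine ⟨max m₀ (n + 1), fun m hm => ?_⟩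
        show cond _ true (cond _ true _) = true
        rw [cond3]
        left
        refine (bex_iff _ _ _).mpr ⟨n, by rw [prefB_length]; omega, ?_⟩
        obtain ⟨t, ht⟩ := prefB_mono g (le_trans (le_max_left _ _) hm)
        show decide (Mh (qc e n) (prefB g m) = some false) = true
        rw [ht]
        exact decide_eq_true (hMhmono _ _ _ _ hm₀)
    obtain ⟨t, ht⟩ := combine (pw k) claim
    refine ⟨t, ?_⟩
    show cond _ _ _ = some ()
    rw [(ball_iff _ _ _).mpr fun e he => ht t le_rfl e he]
    rfl
  · -- soundness
    rintro ⟨m, hm⟩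
    have hb : ball (d2cl Mh N) (k, prefB g m, prefB x m) (pw k) = true := cond_some_eq hm
    have hcl := cond3.mp ((ball_iff _ _ _).mp hb e₀ he₀lt)
    rcases hcl with h1 | h2 | h3
    · exfalso
      obtain ⟨n, hn, hd⟩ := (bex_iff _ _ _).mp h1
      have hfalse : Mh (qc e₀ n) (prefB g m) = some false := of_decide_eq_true hd
      have := oracle_val hMhmono hMhspec hfalse
      have hdom : (phi e₀ n).Dom := by rw [he₀ n]; trivial
      rw [← qc_spec e₀ n] at hdom
      rw [hdom] at this
      exact absurd this (by simp)
    · exfalso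
      obtain ⟨n, hn, hd⟩ := (bex_iff _ _ _).mp h2
      obtain ⟨hiso, hneq⟩ := cond_true_eq hd
      obtain ⟨w, hw⟩ := Option.isSome_iff_exists.mp hiso
      have hwv : w = cond (x n) 1 0 := he₀.evaln_eq hw
      rw [hw] at hneq
      simp only [Option.getD_some] at hneq
      have hnm : n < m := by rwa [prefB_length] at hn
      rw [show ((prefB x m).getD n false) = x n from prefB_getD x hnm] at hneq
      rw [decide_eq_true hwv] at hneq
      exact absurd hneq (by simp)
    · exact (hNspec e₀ x hx he₀).mpr ⟨m, optUnit_some.mp h3⟩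

end D2

/-- For any oracle `g` computing the halting set, a set of computable binary sequences is
Markov-semidecidable relative to `g` iff it is K-semidecidable relative to `g`. -/
theorem stmt14 (g : ℕ → Bool) (hg : computesFrom g (chi halts))
    (S : Set (ℕ → Bool)) (hS : S ⊆ {x | Computable x}) :
    MarkovSemidecRel g S ↔ KSemidecRel g S := by
  obtain ⟨Mh, hMhc, hMhmono, hMhspec⟩ := hg
  constructor
  · rintro ⟨N, hNc, hNmono, hNspec⟩
    exact ⟨d2M Mh N, d2M_comp Mh N hMhc hNc, d2M_mono Mh N hMhmono hNmono,
      fun x hx k hk => d2M_spec Mh N hMhmono hMhspec hNmono hNspec x hx k hk⟩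
  · rintro ⟨MK, hKc, hKmono, hKspec⟩
    exact ⟨d1M MK, d1M_comp MK hKc, d1M_mono MK, fun e x hx hcs => d1M_spec MK hKspec e x hx hcs⟩
end

section
/- There exists a Markov-computable function F : 𝕊 → O(𝔹) that is not K-computable (indeed not even continuous/monotone): F(⊥) = 𝔹 and F(⊤) = 𝔹 \ {T}, where T(n) is the halting time of φ_n(n) if it halts and 0 otherwise, and 𝔹 \ {T} is an effective open subset of Baire space. -/
open Classical

/-- The halting-time function: `T n` is the halting time of `φ_n(n)` (measured by `evaln`),
and `0` if `φ_n(n)` diverges. -/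
noncomputable def T : ℕ → ℕ := fun n =>
  if h : ∃ s, (Nat.Partrec.Code.evaln s (Denumerable.ofNat Nat.Partrec.Code n) n).isSome
  then Nat.find h else 0

/-- The cylinder of elements of Baire space extending the finite sequence `u`. -/
def cylN (u : List ℕ) : Set (ℕ → ℕ) := {f | ∀ i : Fin u.length, f i.1 = u.get i}

/-- `g` is a name of the open set `U ⊆ 𝔹` in the admissible representation of `O(𝔹)`:
`g` enumerates basic cylinders (`0` is padding, `encode u + 1` codes the cylinder `[u]`)
exhausting `U`. -/
def OBName (g : ℕ → ℕ) (U : Set (ℕ → ℕ)) : Prop :=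
  U = {f | ∃ (n : ℕ) (u : List ℕ), g n = Encodable.encode u + 1 ∧ f ∈ cylN u}

/-- Kolmogorov complexity of a point of `𝕊`: least binary length of a Markov-name. -/
noncomputable def KSierp (s : Bool) : ℕ := sInf (Nat.size '' {e | nuS e = s})

namespace Stmt15

def codeOf (n : ℕ) : Nat.Partrec.Code := Denumerable.ofNat _ n

def hlt (s n : ℕ) : Bool := (Nat.Partrec.Code.evaln s (codeOf n) n).isSome

lemma hlt_mono {s s' n : ℕ} (h : s ≤ s') (hs : hlt s n = true) : hlt s' n = true := by
  unfold hlt at *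
  obtain ⟨x, hx⟩ := Option.isSome_iff_exists.1 hs
  exact Option.isSome_iff_exists.2 ⟨x, Nat.Partrec.Code.evaln_mono h hx⟩

lemma hlt_zero (n : ℕ) : hlt 0 n = false := by simp [hlt, Nat.Partrec.Code.evaln]


lemma T_eq_zero {n : ℕ} (h : ¬ ∃ s, hlt s n = true) : T n = 0 := dif_neg h

lemma hlt_T {n : ℕ} (h : ∃ s, hlt s n = true) :
    hlt (T n) n = true ∧ ∀ t, t < T n → hlt t n = false := by
  have h' : ∃ s, (Nat.Partrec.Code.evaln s (Denumerable.ofNat Nat.Partrec.Code n) n).isSome := h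
  rw [T, dif_pos h']
  exact ⟨Nat.find_spec h', fun t ht => Bool.eq_false_iff.2 (Nat.find_min h' ht)⟩

lemma T_pos {n : ℕ} (h : ∃ s, hlt s n = true) : 0 < T n := by
  rcases Nat.eq_zero_or_pos (T n) with h0 | h0
  · have := (hlt_T h).1
    rw [h0, hlt_zero] at this
    exact absurd this (by simp)
  · exact h0

lemma hlt_iff {s n : ℕ} : hlt s n = true ↔ (T n ≠ 0 ∧ T n ≤ s) := by
  by_cases h : ∃ t, hlt t n = true
  · constructor
    · intro hs
      refine ⟨Nat.pos_iff_ne_zero.1 (T_pos h), ?_⟩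
      by_contra hle
      push_neg at hle
      have := (hlt_T h).2 s hle
      rw [hs] at this; exact absurd this (by simp)
    · intro ⟨_, hle⟩
      exact hlt_mono hle (hlt_T h).1
  · constructor
    · intro hs; exact absurd ⟨s, hs⟩ h
    · intro ⟨h0, _⟩; exact absurd (T_eq_zero h) h0

def Tap (s n : ℕ) : ℕ :=
  bif hlt s n then (List.range (s+1)).findIdx (fun t => hlt t n) else 0

lemma Tap_not_halt {s n : ℕ} (h : hlt s n = false) : Tap s n = 0 := by
  rw [Tap, h]; rfl

lemma Tap_eq {s n : ℕ} (h : T n ≤ s) : Tap s n = T n := by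
  by_cases hs : hlt s n = true
  · have hc : ∃ t, hlt t n = true := ⟨s, hs⟩
    have hTlt : T n < s + 1 := Nat.lt_succ_of_le h
    rw [Tap, hs, cond_true]
    rw [List.findIdx_eq (by simpa using hTlt)]
    constructor
    · simpa using (hlt_T hc).1
    · intro j hj
      simpa using (hlt_T hc).2 j (by simpa using hj)
  · have hs' : hlt s n = false := Bool.eq_false_iff.2 hs
    have : T n = 0 := by
      by_contra h0
      exact hs (hlt_iff.2 ⟨h0, h⟩)
    rw [Tap_not_halt hs', this]

def badB (s i v : ℕ) : Bool :=
  ((v != 0) && !(hlt v i && !(hlt (v-1) i))) || ((v == 0) && hlt s i)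

lemma badB_sound {s i v : ℕ} (h : badB s i v = true) : v ≠ T i := by
  rw [badB] at h
  simp only [Bool.or_eq_true, Bool.and_eq_true, bne_iff_ne, beq_iff_eq, Bool.not_eq_true',
    Bool.and_eq_false_iff, Bool.not_eq_false] at h
  rcases h with ⟨hv0, hcase⟩ | ⟨hv0, hs⟩
  · intro hvT
    have hc : ∃ t, hlt t i = true := by
      by_contra hc
      exact hv0 (hvT.trans (T_eq_zero hc))
    have h1 : hlt v i = true := hvT ▸ (hlt_T hc).1
    have h2 : hlt (v-1) i = false := by
      apply (hlt_T hc).2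
      omega
    rcases hcase with hc' | hc'
    · rw [h1] at hc'; simp at hc'
    · rw [h2] at hc'; simp at hc'
  · intro hvT
    have := hlt_iff.1 hs
    omega
lemma badB_complete {i v : ℕ} (h : v ≠ T i) : ∃ s, badB s i v = true := by
  by_cases hv0 : v = 0
  · subst hv0
    have hT0 : T i ≠ 0 := fun h' => h h'.symm
    have hc : ∃ t, hlt t i = true := by
      by_contra hc
      exact hT0 (T_eq_zero hc)
    exact ⟨T i, by rw [badB]; simp [(hlt_T hc).1]⟩
  · refine ⟨0, ?_⟩
    rw [badB]
    have : ¬(hlt v i = true ∧ hlt (v-1) i = false) := by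
      rintro ⟨h1, h2⟩
      have hA := hlt_iff.1 h1
      have hB : ¬(T i ≠ 0 ∧ T i ≤ v - 1) := fun hx => by
        have := hlt_iff.2 hx; rw [h2] at this; simp at this
      apply h
      omega
    simp only [Bool.or_eq_true, Bool.and_eq_true, bne_iff_ne, beq_iff_eq]
    left
    refine ⟨hv0, ?_⟩
    cases h1 : hlt v i
    · simp
    · cases h2 : hlt (v-1) i
      · exact absurd ⟨h1, h2⟩ this
      · simp [h2]

def goodA (s : ℕ) (u : List ℕ) : Bool :=
  decide ((List.range u.length).findIdx (fun i => badB s i (u.getD i 0)) < u.length)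

lemma goodA_iff {s : ℕ} {u : List ℕ} :
    goodA s u = true ↔ ∃ i, i < u.length ∧ badB s i (u.getD i 0) = true := by
  rw [goodA, decide_eq_true_iff]
  rw [show (List.findIdx (fun i => badB s i (u.getD i 0)) (List.range u.length) < u.length) ↔
      (List.findIdx (fun i => badB s i (u.getD i 0)) (List.range u.length) <
        (List.range u.length).length) from by rw [List.length_range]]
  rw [List.findIdx_lt_length]
  simp [List.mem_range]

lemma mem_cylN_iff {f : ℕ → ℕ} {u : List ℕ} :
    f ∈ cylN u ↔ ∀ i, i < u.length → f i = u.getD i 0 := by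
  constructor
  · intro h i hi
    have := h ⟨i, hi⟩
    rw [List.getD_eq_getElem u 0 hi]
    simpa using this
  · intro h i
    have := h i.1 i.2
    rw [List.getD_eq_getElem u 0 i.2] at this
    simpa using this

lemma pref_length (f : ℕ → ℕ) (m : ℕ) : (pref f m).length = m := by simp [pref]

lemma pref_getD (f : ℕ → ℕ) {m i : ℕ} (h : i < m) : (pref f m).getD i 0 = f i := by
  have h' : i < (pref f m).length := by rwa [pref_length]
  rw [List.getD_eq_getElem _ 0 h']
  simp [pref]

lemma mem_cylN_pref (f : ℕ → ℕ) (m : ℕ) : f ∈ cylN (pref f m) := by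
  rw [mem_cylN_iff]
  intro i hi
  rw [pref_getD f (by rwa [pref_length] at hi)]

def hfun2 (e n : ℕ) : ℕ :=
  if n.unpair.2 % 2 = 0 then
    bif goodA n.unpair.1 (Denumerable.ofNat (List ℕ) (n.unpair.2 / 2)) then
      n.unpair.2 / 2 + 1 else 0
  else
    bif hlt n.unpair.1 e then 0
    else Encodable.encode (pref (Tap n.unpair.1) (max (n.unpair.2 / 2) (e + 1))) + 1

lemma dom_iff (e : ℕ) : (phi e e).Dom ↔ ∃ s, hlt s e = true := by
  rw [Part.dom_iff_mem]
  constructor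
  · rintro ⟨x, hx⟩
    rw [phi] at hx
    obtain ⟨k, hk⟩ := Nat.Partrec.Code.evaln_complete.1 hx
    exact ⟨k, Option.isSome_iff_exists.2 ⟨x, hk⟩⟩
  · rintro ⟨s, hs⟩
    unfold hlt codeOf at hs
    obtain ⟨x, hx⟩ := Option.isSome_iff_exists.1 hs
    exact ⟨x, Nat.Partrec.Code.evaln_complete.2 ⟨s, hx⟩⟩

lemma emit_sound {e n : ℕ} {u : List ℕ} {f : ℕ → ℕ}
    (hemit : hfun2 e n = Encodable.encode u + 1) (hf : f ∈ cylN u) :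
    f ≠ T ∨ ¬∃ s, hlt s e = true := by
  rw [hfun2] at hemit
  set s := n.unpair.1 with hsdef
  set j := n.unpair.2 with hjdef
  by_cases hj : j % 2 = 0
  · rw [if_pos hj] at hemit
    left
    cases hg : goodA s (Denumerable.ofNat (List ℕ) (j / 2)) with
    | false => rw [hg] at hemit; simp at hemit
    | true =>
      rw [hg, cond_true] at hemit
      have hju : j / 2 = Encodable.encode u := by omega
      have huu : Denumerable.ofNat (List ℕ) (j/2) = u := by
        rw [hju]; exact Denumerable.ofNat_encode u
      rw [huu] at hg
      obtain ⟨i, hi, hbad⟩ := goodA_iff.1 hg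
      intro hfT
      apply badB_sound hbad
      rw [← mem_cylN_iff.1 hf i hi, hfT]
  · rw [if_neg hj] at hemit
    cases hh : hlt s e with
    | true => rw [hh] at hemit; simp at hemit
    | false =>
      rw [hh, cond_false] at hemit
      have hu : pref (Tap s) (max (j/2) (e+1)) = u :=
        Encodable.encode_injective (by omega)
      by_cases hd : ∃ t, hlt t e = true
      · left
        have hTe : T e ≠ 0 := Nat.pos_iff_ne_zero.1 (T_pos hd)
        have hse : Tap s e = 0 := Tap_not_halt hh
        have hlen' : e < (pref (Tap s) (max (j/2) (e+1))).length := by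
          rw [pref_length]; omega
        intro hfT
        have hfe := mem_cylN_iff.1 hf e (hu ▸ hlen')
        rw [← hu, pref_getD _ (by omega), hse] at hfe
        rw [hfT] at hfe
        exact hTe hfe
      · right; exact hd

lemma emit_ne {e : ℕ} {f : ℕ → ℕ} (hf : f ≠ T) :
    ∃ n u, hfun2 e n = Encodable.encode u + 1 ∧ f ∈ cylN u := by
  have hex : ∃ i, f i ≠ T i := by
    by_contra h; push_neg at h; exact hf (funext h)
  obtain ⟨i, hi⟩ := hex
  obtain ⟨s, hbad⟩ := badB_complete hi
  set u := pref f (i+1) with hudef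
  have hlen : i < u.length := by rw [hudef, pref_length]; omega
  have hgetD : u.getD i 0 = f i := pref_getD f (by omega)
  have hgood : goodA s u = true := goodA_iff.2 ⟨i, hlen, by rwa [hgetD]⟩
  refine ⟨Nat.pair s (2 * Encodable.encode u), u, ?_, mem_cylN_pref f (i+1)⟩
  rw [hfun2, Nat.unpair_pair]
  simp only
  rw [if_pos (by omega : 2 * Encodable.encode u % 2 = 0)]
  have h2 : 2 * Encodable.encode u / 2 = Encodable.encode u := by omega
  rw [h2, Denumerable.ofNat_encode, hgood, cond_true]

lemma emit_T {e : ℕ} (he : ¬∃ t, hlt t e = true) :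
    ∃ n u, hfun2 e n = Encodable.encode u + 1 ∧ T ∈ cylN u := by
  set s := (Finset.range (e+1)).sup T with hsdef
  have hs : ∀ m, m < e + 1 → T m ≤ s := fun m hm =>
    Finset.le_sup (Finset.mem_range.2 hm)
  have hpe : pref (Tap s) (e+1) = pref T (e+1) := by
    unfold pref
    apply List.map_congr_left
    intro x hx
    exact Tap_eq (hs x (List.mem_range.1 hx))
  refine ⟨Nat.pair s 1, pref T (e+1), ?_, mem_cylN_pref T (e+1)⟩
  rw [hfun2, Nat.unpair_pair]
  simp only
  rw [if_neg (by omega : ¬(1 % 2 = 0))]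
  have hh : hlt s e = false := by
    cases h : hlt s e
    · rfl
    · exact absurd ⟨s, h⟩ he
  rw [hh, cond_false]
  have : max (1/2) (e+1) = e + 1 := by omega
  rw [this, hpe]

lemma hfun2_name (e : ℕ) :
    OBName (hfun2 e) (if nuS e = true then {T}ᶜ else Set.univ) := by
  have hnu : nuS e = true ↔ ∃ s, hlt s e = true := by
    rw [nuS, decide_eq_true_iff]
    exact dom_iff e
  rw [OBName]
  by_cases hd : ∃ s, hlt s e = true
  · rw [if_pos (hnu.2 hd)]
    ext f
    simp only [Set.mem_compl_iff, Set.mem_singleton_iff, Set.mem_setOf_eq]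
    constructor
    · exact fun h => emit_ne h
    · rintro ⟨n, u, hemit, hfu⟩
      rcases emit_sound hemit hfu with h | h
      · exact h
      · exact absurd hd h
  · rw [if_neg (fun h => hd (hnu.1 h))]
    ext f
    simp only [Set.mem_univ, true_iff, Set.mem_setOf_eq, iff_true_intro trivial]
    by_cases hfT : f = T
    · subst hfT; exact emit_T hd
    · exact emit_ne hfT

lemma hlt_primrec : Primrec₂ hlt := by
  have h := Nat.Partrec.Code.primrec_evaln
  have : Primrec fun p : ℕ × ℕ =>
      Nat.Partrec.Code.evaln p.1 (codeOf p.2) p.2 :=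
    h.comp ((Primrec.fst.pair
      ((Primrec.ofNat Nat.Partrec.Code).comp Primrec.snd)).pair Primrec.snd)
  exact (Primrec.option_isSome.comp this).to₂

lemma Tap_primrec : Primrec₂ Tap := by
  have hfind : Primrec fun p : ℕ × ℕ =>
      (List.range (p.1 + 1)).findIdx (fun t => hlt t p.2) :=
    Primrec.list_findIdx (Primrec.list_range.comp (Primrec.succ.comp Primrec.fst))
      ((hlt_primrec.comp Primrec.snd (Primrec.snd.comp Primrec.fst)).to₂)
  exact (Primrec.cond (hlt_primrec.comp Primrec.fst Primrec.snd)
    hfind (Primrec.const 0)).to₂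

lemma badB_primrec : Primrec fun t : ℕ × ℕ × ℕ => badB t.1 t.2.1 t.2.2 := by
  have hv : Primrec fun t : ℕ × ℕ × ℕ => t.2.2 := Primrec.snd.comp Primrec.snd
  have hi : Primrec fun t : ℕ × ℕ × ℕ => t.2.1 := Primrec.fst.comp Primrec.snd
  have hs : Primrec fun t : ℕ × ℕ × ℕ => t.1 := Primrec.fst
  have band : Primrec₂ (· && ·) := Primrec.dom_bool₂ _
  have bor : Primrec₂ (· || ·) := Primrec.dom_bool₂ _
  have hne : Primrec fun t : ℕ × ℕ × ℕ => (t.2.2 != 0) :=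
    Primrec.not.comp (Primrec.beq.comp hv (Primrec.const 0))
  have h1 : Primrec fun t : ℕ × ℕ × ℕ => hlt t.2.2 t.2.1 := hlt_primrec.comp hv hi
  have h2 : Primrec fun t : ℕ × ℕ × ℕ => hlt (t.2.2 - 1) t.2.1 :=
    hlt_primrec.comp (Primrec.pred.comp hv) hi
  have hinner : Primrec fun t : ℕ × ℕ × ℕ => !(hlt t.2.2 t.2.1 && !(hlt (t.2.2 - 1) t.2.1)) :=
    Primrec.not.comp (band.comp h1 (Primrec.not.comp h2))
  have hleft : Primrec fun t : ℕ × ℕ × ℕ =>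
      ((t.2.2 != 0) && !(hlt t.2.2 t.2.1 && !(hlt (t.2.2 - 1) t.2.1))) :=
    band.comp hne hinner
  have heq : Primrec fun t : ℕ × ℕ × ℕ => (t.2.2 == 0) :=
    Primrec.beq.comp hv (Primrec.const 0)
  have hright : Primrec fun t : ℕ × ℕ × ℕ => ((t.2.2 == 0) && hlt t.1 t.2.1) :=
    band.comp heq (hlt_primrec.comp hs hi)
  exact (bor.comp hleft hright).of_eq fun t => rfl

lemma hfun2_computable : Computable₂ hfun2 := by
  have hs : Primrec fun p : ℕ × ℕ => p.2.unpair.1 :=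
    Primrec.fst.comp (Primrec.unpair.comp Primrec.snd)
  have hj : Primrec fun p : ℕ × ℕ => p.2.unpair.2 :=
    Primrec.snd.comp (Primrec.unpair.comp Primrec.snd)
  have hdiv : Primrec fun p : ℕ × ℕ => p.2.unpair.2 / 2 :=
    Primrec.nat_div.comp hj (Primrec.const 2)
  have hu : Primrec fun p : ℕ × ℕ => Denumerable.ofNat (List ℕ) (p.2.unpair.2 / 2) :=
    (Primrec.ofNat (List ℕ)).comp hdiv
  have hulen : Primrec fun p : ℕ × ℕ =>
      (Denumerable.ofNat (List ℕ) (p.2.unpair.2 / 2)).length :=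
    Primrec.list_length.comp hu
  have hgetD : Primrec fun q : (ℕ × ℕ) × ℕ =>
      (Denumerable.ofNat (List ℕ) (q.1.2.unpair.2 / 2)).getD q.2 0 :=
    (Primrec.list_getD 0).comp (hu.comp Primrec.fst) Primrec.snd
  have hbadq : Primrec fun q : (ℕ × ℕ) × ℕ =>
      badB q.1.2.unpair.1 q.2
        ((Denumerable.ofNat (List ℕ) (q.1.2.unpair.2 / 2)).getD q.2 0) :=
    badB_primrec.comp ((hs.comp Primrec.fst).pair (Primrec.snd.pair hgetD))
  have hfind : Primrec fun p : ℕ × ℕ =>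
      (List.range (Denumerable.ofNat (List ℕ) (p.2.unpair.2 / 2)).length).findIdx
        (fun i => badB p.2.unpair.1 i
          ((Denumerable.ofNat (List ℕ) (p.2.unpair.2 / 2)).getD i 0)) :=
    Primrec.list_findIdx (Primrec.list_range.comp hulen) hbadq.to₂
  have hgood : Primrec fun p : ℕ × ℕ =>
      goodA p.2.unpair.1 (Denumerable.ofNat (List ℕ) (p.2.unpair.2 / 2)) := by
    have := Primrec.nat_lt.comp hfind hulen
    exact this.decide.of_eq fun p => by simp [goodA]
  have hbranch1 : Primrec fun p : ℕ × ℕ =>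
      (bif goodA p.2.unpair.1 (Denumerable.ofNat (List ℕ) (p.2.unpair.2 / 2)) then
        p.2.unpair.2 / 2 + 1 else 0) :=
    Primrec.cond hgood (Primrec.succ.comp hdiv) (Primrec.const 0)
  have hpref : Primrec fun p : ℕ × ℕ =>
      pref (Tap p.2.unpair.1) (max (p.2.unpair.2 / 2) (p.1 + 1)) :=
    Primrec.list_map
      (Primrec.list_range.comp
        (Primrec.nat_max.comp hdiv (Primrec.succ.comp Primrec.fst)))
      ((Tap_primrec.comp (hs.comp Primrec.fst) Primrec.snd).to₂)
  have hbranch2 : Primrec fun p : ℕ × ℕ =>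
      (bif hlt p.2.unpair.1 p.1 then 0
       else Encodable.encode (pref (Tap p.2.unpair.1)
         (max (p.2.unpair.2 / 2) (p.1 + 1))) + 1) :=
    Primrec.cond (hlt_primrec.comp hs Primrec.fst) (Primrec.const 0)
      (Primrec.succ.comp (Primrec.encode.comp hpref))
  have hcond : PrimrecPred fun p : ℕ × ℕ => p.2.unpair.2 % 2 = 0 :=
    Primrec.eq.comp (Primrec.nat_mod.comp hj (Primrec.const 2)) (Primrec.const 0)
  have : Primrec fun p : ℕ × ℕ => hfun2 p.1 p.2 := by
    have := Primrec.ite hcond hbranch1 hbranch2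
    exact this.of_eq fun p => by rw [hfun2]
  exact this.to₂.to_comp

end Stmt15

/-- There is a Markov-computable function `F : 𝕊 → O(𝔹)`, namely `F(⊥) = 𝔹` and
`F(⊤) = 𝔹 \ {T}`, which is not K-computable: no computable monotone functional maps
(`k ≥ K(s)`, a Type-2 name of `s`) to a name of `F(s)`. -/
theorem stmt15 :
    ∃ F : Bool → Set (ℕ → ℕ),
      F false = Set.univ ∧ F true = {T}ᶜ ∧
      (∃ hfun : ℕ → ℕ → ℕ, Computable₂ hfun ∧ ∀ e, OBName (hfun e) (F (nuS e))) ∧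
      ¬ ∃ M : ℕ → List ℕ → List ℕ, Computable₂ M ∧
          (∀ k l l', M k l <+: M k (l ++ l')) ∧
          ∀ (s : Bool) (f : ℕ → ℕ), SierpName f s → ∀ k, KSierp s ≤ k →
            ∃ g : ℕ → ℕ, OBName g (F s) ∧
              (∀ m, M k (pref f m) = pref g (M k (pref f m)).length) ∧
              (∀ n, ∃ m, n ≤ (M k (pref f m)).length) := by
  classical
  refine ⟨fun b => if b = true then {T}ᶜ else Set.univ, by simp, by simp, ?_, ?_⟩
  · refine ⟨Stmt15.hfun2, Stmt15.hfun2_computable, fun e => ?_⟩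
    exact Stmt15.hfun2_name e
  · rintro ⟨M, -, Mmono, hM⟩
    set k := max (KSierp false) (KSierp true) with hk
    have h0 : SierpName (fun _ => 0) false := by simp [SierpName]
    obtain ⟨g, hg, hpre, hlen⟩ := hM false (fun _ => 0) h0 k (le_max_left _ _)
    rw [OBName] at hg
    simp only [Bool.false_eq_true, if_false] at hg
    have hTmem : T ∈ {f | ∃ n u, g n = Encodable.encode u + 1 ∧ f ∈ cylN u} := by
      rw [← hg]; trivial
    obtain ⟨n, u, hgn, hTu⟩ := hTmem
    obtain ⟨m0, hm0⟩ := hlen (n+1)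
    set L := M k (pref (fun _ => 0) m0) with hL
    have hnL : n < L.length := by omega
    have hLn : L.getD n 0 = Encodable.encode u + 1 := by
      have h1 := hpre m0
      rw [← hL] at h1
      rw [h1] at hnL ⊢
      rw [Stmt15.pref_length] at hnL
      rw [Stmt15.pref_getD g hnL, hgn]
    set f' : ℕ → ℕ := fun i => if i = m0 then 1 else 0 with hf'
    have h1 : SierpName f' true := by
      constructor
      · intro _
        exact ⟨m0, by simp [hf']⟩
      · intro _; rfl
    obtain ⟨g', hg', hpre', hlen'⟩ := hM true f' h1 k (le_max_right _ _)
    have hpref_eq : pref f' m0 = pref (fun _ => 0) m0 := by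
      unfold pref
      apply List.map_congr_left
      intro x hx
      have : x ≠ m0 := Nat.ne_of_lt (List.mem_range.1 hx)
      simp [hf', this]
    have hg'n : g' n = Encodable.encode u + 1 := by
      have h2 := hpre' m0
      rw [hpref_eq, ← hL] at h2
      rw [h2] at hLn hnL
      rw [Stmt15.pref_length] at hnL
      rwa [Stmt15.pref_getD g' hnL] at hLn
    have hTc : T ∈ ({T}ᶜ : Set (ℕ → ℕ)) := by
      rw [OBName] at hg'
      simp only [if_true] at hg'
      rw [hg']
      exact ⟨n, u, hg'n, hTu⟩
    simp at hTc
end
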